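/- Let a ≤ 0, let W : ℝ → [0,∞) vanish on (−∞,0) and be continuous on [0,∞), let k : ℝ → [0,∞) be bounded and measurable, and let Z : ℝ → [0,∞) be continuous. Set K(x,y) = W(x−y)·k(y) for y ≤ x and K(x,y) = 0 for x < y, let K_m be the iterated kernels, K̄_m = Σ_{i=1}^m K_i, R = Σ_{m=1}^∞ K_m, and H_m(x) = Z(x) + ∫_a^x K̄_m(x,y) Z(y) dy. Then for each x ∈ ℝ the sequence (H_m(x))_{m≥1} is nondecreasing in m, and H_m converges, uniformly on every compact subset of ℝ, to the continuous function H(x) = Z(x) + ∫_a^x R(x,y) Z(y) dy. -/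

import Mathlib

open MeasureTheory Set Filter Topology

/-- The iterated kernels: `K₁ = K` and `K_m(x,y) = ∫_y^x K(x,z) K_{m-1}(z,y) dz` for `m ≥ 2`. -/
noncomputable def iterK (K : ℝ → ℝ → ℝ) : ℕ → ℝ → ℝ → ℝ
  | 0 => fun _ _ => 0
  | 1 => K
  | m + 2 => fun x y => ∫ z in y..x, K x z * iterK K (m + 1) z y

/-- The kernel `K(x,y) = W(x-y)·k(y)` for `y ≤ x`, and `0` for `x < y`. -/
noncomputable def volKernel (W k : ℝ → ℝ) : ℝ → ℝ → ℝ :=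
  fun x y => if y ≤ x then W (x - y) * k y else 0

namespace Stmt18Aux

variable {W k : ℝ → ℝ}

lemma volKernel_nonneg (hWn : ∀ x, 0 ≤ W x) (hkn : ∀ y, 0 ≤ k y) (x y : ℝ) :
    0 ≤ volKernel W k x y := by
  unfold volKernel
  split_ifs
  · exact mul_nonneg (hWn _) (hkn _)
  · exact le_rfl

lemma volKernel_zero {x y : ℝ} (h : x < y) : volKernel W k x y = 0 :=
  if_neg (not_le.2 h)

lemma iterK_zero_of_lt : ∀ (m : ℕ) {x y : ℝ}, x < y → iterK (volKernel W k) m x y = 0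
  | 0, _, _, _ => rfl
  | 1, _, _, h => volKernel_zero h
  | (m+2), x, y, h => by
    show (∫ z in y..x, volKernel W k x z * iterK (volKernel W k) (m+1) z y) = 0
    rw [intervalIntegral.integral_of_ge h.le]
    have : ∀ z ∈ Ioc x y, volKernel W k x z * iterK (volKernel W k) (m+1) z y = 0 := by
      intro z hz
      rw [volKernel_zero hz.1, zero_mul]
    rw [setIntegral_congr_fun measurableSet_Ioc this]
    simp

lemma iterK_succ_eq (m : ℕ) (x y : ℝ) :
    iterK (volKernel W k) (m+2) x y
      = ∫ z in Ioc y x, volKernel W k x z * iterK (volKernel W k) (m+1) z y := by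
  rcases le_or_gt y x with h | h
  · show (∫ z in y..x, _) = _
    rw [intervalIntegral.integral_of_le h]
  · rw [iterK_zero_of_lt (m+2) h, Ioc_eq_empty (not_lt.2 h.le)]
    simp

lemma measW (hW0 : ∀ x < (0:ℝ), W x = 0) (hWc : ContinuousOn W (Ici 0)) :
    Measurable W := by
  classical
  have hEq : W = (Ici (0:ℝ)).piecewise W (fun _ => 0) := by
    funext x
    by_cases h : x ∈ Ici (0:ℝ)
    · simp [Set.piecewise, h]
    · simp [Set.piecewise, h, hW0 x (by simpa using h)]
  rw [hEq]
  exact ContinuousOn.measurable_piecewise hWc continuousOn_const measurableSet_Ici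

lemma measK (hW : Measurable W) (hk : Measurable k) :
    Measurable (fun p : ℝ × ℝ => volKernel W k p.1 p.2) := by
  unfold volKernel
  exact Measurable.ite (measurableSet_le measurable_snd measurable_fst)
    ((hW.comp (measurable_fst.sub measurable_snd)).mul (hk.comp measurable_snd))
    measurable_const

lemma measIter (hW : Measurable W) (hk : Measurable k) :
    ∀ m, Measurable (fun p : ℝ × ℝ => iterK (volKernel W k) m p.1 p.2)
  | 0 => measurable_const
  | 1 => measK hW hk
  | (m+2) => by
    classical
    have IH := measIter hW hk (m+1)
    have hEq : (fun p : ℝ × ℝ => iterK (volKernel W k) (m+2) p.1 p.2)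
        = fun p : ℝ × ℝ => ∫ z, (Ioc p.2 p.1).indicator
            (fun z => volKernel W k p.1 z * iterK (volKernel W k) (m+1) z p.2) z := by
      funext p
      rw [iterK_succ_eq, ← integral_indicator measurableSet_Ioc]
    rw [hEq]
    apply StronglyMeasurable.measurable
    apply MeasureTheory.StronglyMeasurable.integral_prod_right'
      (f := fun q : (ℝ × ℝ) × ℝ => (Ioc q.1.2 q.1.1).indicator
        (fun z => volKernel W k q.1.1 z * iterK (volKernel W k) (m+1) z q.1.2) q.2)
    apply Measurable.stronglyMeasurable
    simp only [Set.indicator_apply, mem_Ioc]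
    apply Measurable.ite
    · exact MeasurableSet.inter
        (measurableSet_lt (measurable_fst.snd) measurable_snd)
        (measurableSet_le measurable_snd (measurable_fst.fst))
    · exact ((measK hW hk).comp ((measurable_fst.fst).prodMk measurable_snd)).mul
        (IH.comp (measurable_snd.prodMk (measurable_fst.snd)))
    · exact measurable_const

lemma iterK_nonneg (hWn : ∀ x, 0 ≤ W x) (hkn : ∀ y, 0 ≤ k y) :
    ∀ m (x y : ℝ), 0 ≤ iterK (volKernel W k) m x y
  | 0, _, _ => le_refl 0
  | 1, x, y => volKernel_nonneg hWn hkn x y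
  | (m+2), x, y => by
    rw [iterK_succ_eq]
    apply setIntegral_nonneg measurableSet_Ioc
    intro z _
    exact mul_nonneg (volKernel_nonneg hWn hkn _ _) (iterK_nonneg hWn hkn (m+1) z y)

end Stmt18Aux

namespace Stmt18Aux

variable {W k : ℝ → ℝ}

lemma iterK_le_bound (hWn : ∀ x, 0 ≤ W x) (hkn : ∀ y, 0 ≤ k y)
    (hW : Measurable W) (hk : Measurable k)
    {lo hi M C : ℝ} (hC : ∀ y, k y ≤ C)
    (hM : ∀ t, 0 ≤ t → t ≤ hi - lo → W t ≤ M) :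
    ∀ (m : ℕ) (x y : ℝ), lo ≤ y → y ≤ x → x ≤ hi →
      iterK (volKernel W k) (m+1) x y ≤ (M*C)^(m+1) * (x - y)^m / m.factorial := by
  intro m
  induction m with
  | zero =>
    intro x y hlo hyx hxhi
    have h1 : volKernel W k x y = W (x - y) * k y := if_pos hyx
    rw [show (0:ℕ)+1 = 1 from rfl]
    show volKernel W k x y ≤ _
    rw [h1]
    have hWb : W (x - y) ≤ M := hM _ (by linarith) (by linarith)
    have : W (x - y) * k y ≤ M * C :=
      mul_le_mul hWb (hC y) (hkn y) (le_trans (hWn _) hWb)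
    simpa using this
  | succ m IH =>
    intro x y hlo hyx hxhi
    have hM0 : 0 ≤ M := le_trans (hWn _) (hM (x - y) (by linarith) (by linarith))
    have hC0 : 0 ≤ C := le_trans (hkn y) (hC y)
    have hMC0 : 0 ≤ M * C := mul_nonneg hM0 hC0
    have hfac : (0:ℝ) < m.factorial := by exact_mod_cast m.factorial_pos
    rw [iterK_succ_eq]
    set g : ℝ → ℝ := fun z => (M*C)^(m+2) / m.factorial * (z - y)^m with hg
    have hgc : Continuous g := by fun_prop
    have hpt : ∀ z ∈ Ioc y x,
        volKernel W k x z * iterK (volKernel W k) (m+1) z y ≤ g z := by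
      intro z hz
      have hKb : volKernel W k x z ≤ M * C := by
        rw [volKernel, if_pos hz.2]
        have hWb : W (x - z) ≤ M := hM _ (by linarith [hz.2]) (by linarith [hz.1.le])
        exact mul_le_mul hWb (hC z) (hkn z) (le_trans (hWn _) hWb)
      have hIb := IH z y hlo hz.1.le (le_trans hz.2 hxhi)
      calc volKernel W k x z * iterK (volKernel W k) (m+1) z y
          ≤ (M*C) * ((M*C)^(m+1) * (z - y)^m / m.factorial) :=
            mul_le_mul hKb hIb (iterK_nonneg hWn hkn _ _ _) hMC0
        _ = g z := by rw [hg]; ring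
    have hgint : IntegrableOn g (Ioc y x) := hgc.integrableOn_Ioc
    have hfint : IntegrableOn
        (fun z => volKernel W k x z * iterK (volKernel W k) (m+1) z y) (Ioc y x) := by
      apply Integrable.mono' hgint
      · exact (((measK hW hk).comp ((measurable_const).prodMk measurable_id)).mul
          ((measIter hW hk (m+1)).comp (measurable_id.prodMk measurable_const))).aestronglyMeasurable
      · refine (ae_restrict_iff' measurableSet_Ioc).2 (Eventually.of_forall ?_)
        intro z hz
        rw [Real.norm_eq_abs, abs_of_nonneg (mul_nonneg (volKernel_nonneg hWn hkn _ _)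
          (iterK_nonneg hWn hkn _ _ _))]
        exact hpt z hz
    calc (∫ z in Ioc y x, volKernel W k x z * iterK (volKernel W k) (m+1) z y)
        ≤ ∫ z in Ioc y x, g z := setIntegral_mono_on hfint hgint measurableSet_Ioc hpt
      _ = (M*C)^(m+2) / m.factorial * ∫ z in Ioc y x, (z - y)^m := by
          rw [hg]
          exact integral_const_mul _ _
      _ = (M*C)^(m+2) / m.factorial * ((x - y)^(m+1) / (m+1)) := by
          congr 1
          rw [← intervalIntegral.integral_of_le hyx,
            intervalIntegral.integral_comp_sub_right (fun t => t^m) y, sub_self,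
            integral_pow]
          simp
      _ = (M*C)^(m+1+1) * (x - y)^(m+1) / (m+1).factorial := by
          rw [Nat.factorial_succ]
          push_cast
          rw [div_mul_div_comm]
          ring

end Stmt18Aux

namespace Stmt18Aux

variable {W k : ℝ → ℝ}

lemma iterK_le_bound' (hWn : ∀ x, 0 ≤ W x) (hkn : ∀ y, 0 ≤ k y)
    (hW : Measurable W) (hk : Measurable k)
    {lo hi M C : ℝ} (hC : ∀ y, k y ≤ C)
    (hM : ∀ t, 0 ≤ t → t ≤ hi - lo → W t ≤ M) :
    ∀ (m : ℕ) (x y : ℝ), lo ≤ y → y ≤ x → x ≤ hi →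
      iterK (volKernel W k) (m+1) x y ≤ (M*C)^(m+1) * (hi - lo)^m / m.factorial := by
  intro m x y h1 h2 h3
  refine le_trans (iterK_le_bound hWn hkn hW hk hC hM m x y h1 h2 h3) ?_
  have hM0 : 0 ≤ M := le_trans (hWn _) (hM (x - y) (by linarith) (by linarith))
  have hC0 : 0 ≤ C := le_trans (hkn y) (hC y)
  gcongr

lemma summable_bound (M C r : ℝ) :
    Summable (fun m : ℕ => (M*C)^(m+1) * r^m / m.factorial) := by
  have h := (Real.summable_pow_div_factorial ((M*C)*r)).mul_left (M*C)
  refine h.congr fun m => ?_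
  rw [mul_pow]
  ring

lemma summable_iterK (hWn : ∀ x, 0 ≤ W x) (hW0 : ∀ x < (0:ℝ), W x = 0)
    (hWc : ContinuousOn W (Ici 0)) (hkn : ∀ y, 0 ≤ k y)
    {C : ℝ} (hC : ∀ y, k y ≤ C) (hk : Measurable k) (x y : ℝ) :
    Summable (fun m : ℕ => iterK (volKernel W k) (m+1) x y) := by
  have hW : Measurable W := measW hW0 hWc
  rcases lt_or_ge x y with h | h
  · exact summable_zero.congr fun m => (iterK_zero_of_lt (m+1) h).symm
  · obtain ⟨t, ht, hmax⟩ := isCompact_Icc.exists_isMaxOn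
      (nonempty_Icc.2 (sub_nonneg.2 h))
      (hWc.mono (fun u hu => hu.1))
    refine Summable.of_nonneg_of_le (fun m => iterK_nonneg hWn hkn _ _ _)
      (fun m => ?_) (summable_bound (W t) C (x - y))
    have hM : ∀ t', 0 ≤ t' → t' ≤ x - y → W t' ≤ W t := fun t' h1 h2 => hmax ⟨h1, h2⟩
    simpa using iterK_le_bound hWn hkn hW hk hC (lo := y) (hi := x)
      (by simpa using hM) m x y le_rfl h le_rfl

lemma measR (hWn : ∀ x, 0 ≤ W x) (hW0 : ∀ x < (0:ℝ), W x = 0)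
    (hWc : ContinuousOn W (Ici 0)) (hkn : ∀ y, 0 ≤ k y)
    {C : ℝ} (hC : ∀ y, k y ≤ C) (hk : Measurable k) :
    Measurable (fun p : ℝ × ℝ => ∑' m : ℕ, iterK (volKernel W k) (m+1) p.1 p.2) := by
  have hW : Measurable W := measW hW0 hWc
  apply measurable_of_tendsto_metrizable
    (f := fun n (p : ℝ × ℝ) => ∑ i ∈ Finset.range n, iterK (volKernel W k) (i+1) p.1 p.2)
  · intro n
    exact Finset.measurable_sum _ fun i _ => measIter hW hk (i+1)
  · rw [tendsto_pi_nhds]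
    intro p
    exact (summable_iterK hWn hW0 hWc hkn hC hk p.1 p.2).hasSum.tendsto_sum_nat

lemma integrableOn_of_bounded {f : ℝ → ℝ} {s : Set ℝ} (hs : MeasurableSet s)
    (hμ : volume s < ⊤) (hf : Measurable f) {c : ℝ} (hc : ∀ y ∈ s, |f y| ≤ c) :
    IntegrableOn f s := by
  have : IsFiniteMeasure (volume.restrict s) :=
    ⟨by rwa [Measure.restrict_apply_univ]⟩
  apply Integrable.mono' (integrable_const c) hf.aestronglyMeasurable.restrict
  refine (ae_restrict_iff' hs).2 (Eventually.of_forall ?_)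
  intro y hy
  simpa using hc y hy

lemma intervalIntegral_eq_Ioc (f : ℝ → ℝ) (a x : ℝ) (h : ∀ y, x < y → f y = 0) :
    (∫ y in a..x, f y) = ∫ y in Ioc a x, f y := by
  rcases le_or_gt a x with hax | hax
  · exact intervalIntegral.integral_of_le hax
  · rw [intervalIntegral.integral_of_ge hax.le]
    have h1 : ∀ y ∈ Ioc x a, f y = 0 := fun y hy => h y hy.1
    rw [setIntegral_congr_fun measurableSet_Ioc h1, Ioc_eq_empty (not_lt.2 hax.le)]
    simp

lemma sum_Icc_one (g : ℕ → ℝ) (m : ℕ) :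
    ∑ i ∈ Finset.Icc 1 m, g i = ∑ i ∈ Finset.range m, g (i+1) := by
  rw [← Finset.Ico_add_one_right_eq_Icc, Finset.sum_Ico_eq_sum_range]
  simp [add_comm]

end Stmt18Aux

namespace Stmt18Aux

variable {W k : ℝ → ℝ}

lemma ae_ne (x₀ : ℝ) : ∀ᵐ (z : ℝ), z ≠ x₀ := by
  rw [ae_iff]
  have h : {z : ℝ | ¬ z ≠ x₀} = {x₀} := by ext z; simp
  rw [h]
  exact Real.volume_singleton

lemma tendsto_volKernel (hWc : ContinuousOn W (Ici 0)) {x₀ y : ℝ} (h : y < x₀) :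
    Tendsto (fun x => volKernel W k x y) (𝓝 x₀) (𝓝 (volKernel W k x₀ y)) := by
  have hev : ∀ᶠ x in 𝓝 x₀, W (x - y) * k y = volKernel W k x y :=
    eventually_of_mem (Ioi_mem_nhds h) fun x hx => (if_pos (le_of_lt hx)).symm
  have hW' : ContinuousAt W (x₀ - y) := hWc.continuousAt (Ici_mem_nhds (by linarith))
  have h1 : Tendsto (fun x : ℝ => x - y) (𝓝 x₀) (𝓝 (x₀ - y)) :=
    (continuous_id.sub continuous_const).tendsto x₀
  have h2 : Tendsto (fun x => W (x - y) * k y) (𝓝 x₀) (𝓝 (W (x₀ - y) * k y)) :=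
    (Filter.Tendsto.comp hW' h1).mul_const _
  rw [show volKernel W k x₀ y = W (x₀ - y) * k y from if_pos h.le]
  exact h2.congr' hev

lemma tendsto_iterK (hWn : ∀ x, 0 ≤ W x) (hW0 : ∀ x < (0:ℝ), W x = 0)
    (hWc : ContinuousOn W (Ici 0)) (hkn : ∀ y, 0 ≤ k y)
    {C : ℝ} (hC : ∀ y, k y ≤ C) (hk : Measurable k) :
    ∀ (m : ℕ) {x₀ y : ℝ}, y < x₀ →
      Tendsto (fun x => iterK (volKernel W k) (m+1) x y) (𝓝 x₀)
        (𝓝 (iterK (volKernel W k) (m+1) x₀ y))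
  | 0, x₀, y, h => tendsto_volKernel hWc h
  | (m+1), x₀, y, h => by
    have hW : Measurable W := measW hW0 hWc
    have hrw : ∀ x, iterK (volKernel W k) (m+2) x y
        = ∫ z, (Ioc y x).indicator
            (fun z => volKernel W k x z * iterK (volKernel W k) (m+1) z y) z := by
      intro x
      rw [iterK_succ_eq, ← integral_indicator measurableSet_Ioc]
    simp only [hrw]
    set b := x₀ + 1 with hbdef
    obtain ⟨t, ht, hmax⟩ := isCompact_Icc.exists_isMaxOn (s := Icc (0:ℝ) (b - y))
      (nonempty_Icc.2 (by simp only [hbdef]; linarith)) (hWc.mono fun u hu => hu.1)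
    set M := W t with hMdef
    have hM : ∀ t', 0 ≤ t' → t' ≤ b - y → W t' ≤ M := fun t' h1 h2 => hmax ⟨h1, h2⟩
    have hM0 : 0 ≤ M := hWn t
    have hC0 : 0 ≤ C := le_trans (hkn y) (hC y)
    have hfac : (0:ℝ) < m.factorial := by exact_mod_cast m.factorial_pos
    have hby : (0:ℝ) ≤ b - y := by simp only [hbdef]; linarith
    set c := (M*C) * ((M*C)^(m+1) * (b - y)^m / m.factorial) with hc
    have hc0 : 0 ≤ c := by
      apply mul_nonneg (mul_nonneg hM0 hC0)
      apply div_nonneg _ hfac.le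
      exact mul_nonneg (pow_nonneg (mul_nonneg hM0 hC0) _) (pow_nonneg hby _)
    apply tendsto_integral_filter_of_dominated_convergence
        ((Ioc y b).indicator fun _ => c)
    · apply Eventually.of_forall
      intro x
      apply Measurable.aestronglyMeasurable
      apply Measurable.indicator _ measurableSet_Ioc
      exact ((measK hW hk).comp (measurable_const.prodMk measurable_id)).mul
        ((measIter hW hk (m+1)).comp (measurable_id.prodMk measurable_const))
    · refine eventually_of_mem (Iio_mem_nhds (show x₀ < b by simp [hbdef])) ?_
      intro x hx
      apply Eventually.of_forall
      intro z
      by_cases hz : z ∈ Ioc y x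
      · rw [indicator_of_mem hz, indicator_of_mem (show z ∈ Ioc y b from ⟨hz.1, le_trans hz.2 hx.le⟩)]
        have hKb : volKernel W k x z ≤ M * C := by
          rw [volKernel, if_pos hz.2]
          have hWb : W (x - z) ≤ M := by
            refine hM _ (by linarith [hz.2]) ?_
            have h1 := hz.1
            have h2 : x < b := hx
            linarith
          exact mul_le_mul hWb (hC z) (hkn z) (le_trans (hWn _) hWb)
        have hIb : iterK (volKernel W k) (m+1) z y
            ≤ (M*C)^(m+1) * (b - y)^m / m.factorial :=
          iterK_le_bound' hWn hkn hW hk hC hM m z y le_rfl hz.1.le (le_trans hz.2 hx.le)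
        rw [Real.norm_eq_abs, abs_of_nonneg (mul_nonneg (volKernel_nonneg hWn hkn _ _)
          (iterK_nonneg hWn hkn _ _ _))]
        calc volKernel W k x z * iterK (volKernel W k) (m+1) z y
            ≤ (M*C) * ((M*C)^(m+1) * (b - y)^m / m.factorial) :=
              mul_le_mul hKb hIb (iterK_nonneg hWn hkn _ _ _) (mul_nonneg hM0 hC0)
          _ = c := rfl
      · rw [indicator_of_notMem hz, norm_zero]
        exact indicator_nonneg (fun _ _ => hc0) _
    · exact (integrableOn_const measure_Ioc_lt_top.ne).integrable_indicator
        measurableSet_Ioc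
    · filter_upwards [ae_ne x₀] with z hz
      by_cases hzy : z ≤ y
      · have h0 : ∀ x : ℝ, (Ioc y x).indicator
            (fun z => volKernel W k x z * iterK (volKernel W k) (m+1) z y) z = 0 :=
          fun x => indicator_of_notMem (fun hmem => absurd hmem.1 (not_lt.2 hzy)) _
        simp only [h0]
        exact tendsto_const_nhds
      · push_neg at hzy
        rcases lt_or_gt_of_ne hz with hlt | hgt
        · have hev : ∀ᶠ x in 𝓝 x₀, volKernel W k x z * iterK (volKernel W k) (m+1) z y
              = (Ioc y x).indicator
                  (fun z => volKernel W k x z * iterK (volKernel W k) (m+1) z y) z :=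
            eventually_of_mem (Ioi_mem_nhds hlt) fun x hx =>
              (indicator_of_mem (show z ∈ Ioc y x from ⟨hzy, le_of_lt hx⟩) (fun z => volKernel W k x z * iterK (volKernel W k) (m+1) z y)).symm
          rw [indicator_of_mem (show z ∈ Ioc y x₀ from ⟨hzy, hlt.le⟩)]
          exact ((tendsto_volKernel hWc hlt).mul_const _).congr' hev
        · have hev : ∀ᶠ x in 𝓝 x₀, (0:ℝ)
              = (Ioc y x).indicator
                  (fun z => volKernel W k x z * iterK (volKernel W k) (m+1) z y) z :=
            eventually_of_mem (Iio_mem_nhds hgt) fun x hx =>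
              (indicator_of_notMem (fun hmem => absurd hmem.2 (not_le.2 hx)) _).symm
          rw [indicator_of_notMem (fun hmem => absurd hmem.2 (not_le.2 hgt))]
          exact tendsto_const_nhds.congr' hev

end Stmt18Aux

/-- The Picard iterates `H_m(x) = Z(x) + ∫_a^x K̄_m(x,y) Z(y) dy`, where
`K̄_m = Σ_{i=1}^m K_i`. -/
noncomputable def picardH (W k Z : ℝ → ℝ) (a : ℝ) (m : ℕ) (x : ℝ) : ℝ :=
  Z x + ∫ y in a..x, (∑ i ∈ Finset.Icc 1 m, iterK (volKernel W k) i x y) * Z y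

/-- The limit function `H(x) = Z(x) + ∫_a^x R(x,y) Z(y) dy`, where
`R = Σ_{m=1}^∞ K_m` is the resolvent kernel. -/
noncomputable def limitH (W k Z : ℝ → ℝ) (a : ℝ) (x : ℝ) : ℝ :=
  Z x + ∫ y in a..x, (∑' m : ℕ, iterK (volKernel W k) (m + 1) x y) * Z y

namespace Stmt18Aux

lemma picardH_eq (W k Z : ℝ → ℝ) (a : ℝ) (m : ℕ) (x : ℝ) :
    picardH W k Z a m x
      = Z x + ∫ y in Ioc a x, (∑ i ∈ Finset.Icc 1 m, iterK (volKernel W k) i x y) * Z y := by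
  unfold picardH
  congr 1
  apply intervalIntegral_eq_Ioc
  intro y hy
  have h : ∀ i ∈ Finset.Icc 1 m, iterK (volKernel W k) i x y = 0 :=
    fun i _ => iterK_zero_of_lt i hy
  rw [Finset.sum_congr rfl h]
  simp

lemma limitH_eq (W k Z : ℝ → ℝ) (a : ℝ) (x : ℝ) :
    limitH W k Z a x
      = Z x + ∫ y in Ioc a x, (∑' m : ℕ, iterK (volKernel W k) (m + 1) x y) * Z y := by
  unfold limitH
  congr 1
  apply intervalIntegral_eq_Ioc
  intro y hy
  have h : ∀ m : ℕ, iterK (volKernel W k) (m+1) x y = 0 :=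
    fun m => iterK_zero_of_lt (m+1) hy
  simp [h]

end Stmt18Aux

open Stmt18Aux in
/-- the Picard iterates `H_m` are nondecreasing in `m ≥ 1` and converge,
uniformly on every compact subset of `ℝ`, to the continuous function `H`. -/
theorem stmt18 (a : ℝ) (ha : a ≤ 0)
    (W : ℝ → ℝ) (hW0 : ∀ x < (0:ℝ), W x = 0) (hWnonneg : ∀ x, 0 ≤ W x)
    (hWc : ContinuousOn W (Ici 0))
    (k : ℝ → ℝ) (hknonneg : ∀ y, 0 ≤ k y) (hkbdd : ∃ C, ∀ y, k y ≤ C)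
    (hkmeas : Measurable k)
    (Z : ℝ → ℝ) (hZc : Continuous Z) (hZnonneg : ∀ x, 0 ≤ Z x) :
    (∀ x : ℝ, ∀ m n : ℕ, 1 ≤ m → m ≤ n → picardH W k Z a m x ≤ picardH W k Z a n x) ∧
      (∀ s : Set ℝ, IsCompact s →
        TendstoUniformlyOn (fun m x => picardH W k Z a m x) (limitH W k Z a) atTop s) ∧
      Continuous (limitH W k Z a) := by
  classical
  obtain ⟨C₀, hC₀⟩ := hkbdd
  set C : ℝ := max C₀ 0 with hCdef
  have hC : ∀ y, k y ≤ C := fun y => le_trans (hC₀ y) (le_max_left _ _)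
  have hWm : Measurable W := measW hW0 hWc
  have hZm : Measurable Z := hZc.measurable
  have hsum : ∀ x y : ℝ, Summable (fun m : ℕ => iterK (volKernel W k) (m+1) x y) :=
    fun x y => summable_iterK hWnonneg hW0 hWc hknonneg hC hkmeas x y
  -- master bound
  have master : ∀ b : ℝ, a ≤ b → ∃ B : ℕ → ℝ, (∀ j, 0 ≤ B j) ∧ Summable B ∧
      ∀ (j : ℕ) (x y : ℝ), a ≤ y → y ≤ x → x ≤ b →
        iterK (volKernel W k) (j+1) x y ≤ B j := by
    intro b hab
    obtain ⟨t, ht, hmax⟩ := isCompact_Icc.exists_isMaxOn (s := Icc (0:ℝ) (b - a))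
      (nonempty_Icc.2 (by linarith)) (hWc.mono fun u hu => hu.1)
    have hM : ∀ t', 0 ≤ t' → t' ≤ b - a → W t' ≤ W t := fun t' h1 h2 => hmax ⟨h1, h2⟩
    refine ⟨fun j => (W t * C)^(j+1) * (b - a)^j / j.factorial, fun j => ?_,
      summable_bound _ _ _, fun j x y h1 h2 h3 =>
        iterK_le_bound' hWnonneg hknonneg hWm hkmeas hC hM j x y h1 h2 h3⟩
    have h0 := hWnonneg t
    have hC0 : (0:ℝ) ≤ C := le_max_right _ _
    have h1 : (0:ℝ) ≤ b - a := by linarith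
    have hfac : (0:ℝ) < j.factorial := by exact_mod_cast j.factorial_pos
    exact div_nonneg (mul_nonneg (pow_nonneg (mul_nonneg h0 hC0) _) (pow_nonneg h1 _)) hfac.le
  -- integrability of the partial-sum integrands
  have hIntS : ∀ (m : ℕ) (x : ℝ), IntegrableOn
      (fun y => (∑ i ∈ Finset.Icc 1 m, iterK (volKernel W k) i x y) * Z y) (Ioc a x) := by
    intro m x
    rcases le_or_gt x a with hxa | hax
    · rw [Ioc_eq_empty (not_lt.2 hxa)]; exact integrableOn_empty
    · obtain ⟨B, hB0, hBsum, hBle⟩ := master x hax.le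
      obtain ⟨t, ht, hZmax⟩ := isCompact_Icc.exists_isMaxOn (s := Icc a x)
        (nonempty_Icc.2 hax.le) hZc.continuousOn
      apply integrableOn_of_bounded measurableSet_Ioc measure_Ioc_lt_top
      · exact (Finset.measurable_sum _ fun i _ =>
          (measIter hWm hkmeas i).comp (measurable_const.prodMk measurable_id)).mul hZm
      · intro y hy
        have hterm : ∀ i ∈ Finset.Icc 1 m, iterK (volKernel W k) i x y ≤ B (i-1) := by
          intro i hi
          have h1 : 1 ≤ i := (Finset.mem_Icc.1 hi).1
          have hieq : i = (i - 1) + 1 := (Nat.succ_pred_eq_of_pos h1).symm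
          rw [hieq]
          exact hBle (i-1) x y hy.1.le hy.2 le_rfl
        have hsnn : 0 ≤ ∑ i ∈ Finset.Icc 1 m, iterK (volKernel W k) i x y :=
          Finset.sum_nonneg fun i _ => iterK_nonneg hWnonneg hknonneg i x y
        rw [abs_of_nonneg (mul_nonneg hsnn (hZnonneg y))]
        exact mul_le_mul (Finset.sum_le_sum hterm) (hZmax ⟨hy.1.le, hy.2⟩) (hZnonneg y)
          (Finset.sum_nonneg fun i _ => hB0 _)
  -- integrability of the resolvent integrand
  have hIntR : ∀ x : ℝ, IntegrableOn
      (fun y => (∑' i : ℕ, iterK (volKernel W k) (i+1) x y) * Z y) (Ioc a x) := by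
    intro x
    rcases le_or_gt x a with hxa | hax
    · rw [Ioc_eq_empty (not_lt.2 hxa)]; exact integrableOn_empty
    · obtain ⟨B, hB0, hBsum, hBle⟩ := master x hax.le
      obtain ⟨t, ht, hZmax⟩ := isCompact_Icc.exists_isMaxOn (s := Icc a x)
        (nonempty_Icc.2 hax.le) hZc.continuousOn
      apply integrableOn_of_bounded (c := (∑' i, B i) * Z t) measurableSet_Ioc
        measure_Ioc_lt_top
      · exact ((measR hWnonneg hW0 hWc hknonneg hC hkmeas).comp
          (measurable_const.prodMk measurable_id)).mul hZm
      · intro y hy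
        have htnn : 0 ≤ ∑' i : ℕ, iterK (volKernel W k) (i+1) x y :=
          tsum_nonneg fun i => iterK_nonneg hWnonneg hknonneg _ x y
        rw [abs_of_nonneg (mul_nonneg htnn (hZnonneg y))]
        refine mul_le_mul ?_ (hZmax ⟨hy.1.le, hy.2⟩) (hZnonneg y)
          (tsum_nonneg fun i => hB0 _)
        exact Summable.tsum_le_tsum (fun i => hBle i x y hy.1.le hy.2 le_rfl) (hsum x y) hBsum
  -- Part 1 : monotonicity
  have part1 : ∀ (x : ℝ) (m n : ℕ), m ≤ n →
      picardH W k Z a m x ≤ picardH W k Z a n x := by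
    intro x m n hmn
    rw [picardH_eq, picardH_eq]
    apply add_le_add le_rfl
    apply setIntegral_mono_on (hIntS m x) (hIntS n x) measurableSet_Ioc
    intro y hy
    apply mul_le_mul_of_nonneg_right _ (hZnonneg y)
    apply Finset.sum_le_sum_of_subset_of_nonneg (Finset.Icc_subset_Icc_right hmn)
    intro i _ _
    exact iterK_nonneg hWnonneg hknonneg i x y
  -- Part 2 : uniform convergence on compacts
  have part2 : ∀ s : Set ℝ, IsCompact s →
      TendstoUniformlyOn (fun m x => picardH W k Z a m x) (limitH W k Z a) atTop s := by
    intro s hs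
    rcases s.eq_empty_or_nonempty with rfl | hne
    · exact tendstoUniformlyOn_empty
    obtain ⟨b₀, hb₀s, hb₀⟩ := hs.exists_isMaxOn hne continuousOn_id
    set b : ℝ := max b₀ a with hbdef
    have hab : a ≤ b := le_max_right _ _
    have hxb : ∀ x ∈ s, x ≤ b := fun x hx => le_trans (hb₀ hx) (le_max_left _ _)
    obtain ⟨B, hB0, hBsum, hBle⟩ := master b hab
    obtain ⟨t, ht, hZmax⟩ := isCompact_Icc.exists_isMaxOn (s := Icc a b)
      (nonempty_Icc.2 hab) hZc.continuousOn
    have hZ₀0 : 0 ≤ Z t := hZnonneg t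
    have htail0 : ∀ m : ℕ, 0 ≤ ∑' i, B (i + m) :=
      fun m => tsum_nonneg fun i => hB0 _
    have hεt : Tendsto (fun m : ℕ => (∑' i, B (i + m)) * (Z t * (b - a))) atTop (𝓝 0) := by
      have h := (tendsto_sum_nat_add B).mul_const (Z t * (b - a))
      simpa using h
    rw [Metric.tendstoUniformlyOn_iff]
    intro ε hε
    filter_upwards [hεt.eventually_lt_const hε] with m hm x hx
    have key : 0 ≤ limitH W k Z a x - picardH W k Z a m x ∧
        limitH W k Z a x - picardH W k Z a m x ≤ (∑' i, B (i + m)) * (Z t * (b - a)) := by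
      have hdiff : limitH W k Z a x - picardH W k Z a m x
          = (∫ y in Ioc a x, (∑' i : ℕ, iterK (volKernel W k) (i+1) x y) * Z y)
            - ∫ y in Ioc a x, (∑ i ∈ Finset.Icc 1 m, iterK (volKernel W k) i x y) * Z y := by
        rw [limitH_eq, picardH_eq]; ring
      rcases le_or_gt x a with hxa | hax
      · rw [hdiff, Ioc_eq_empty (not_lt.2 hxa)]
        simp only [Measure.restrict_empty, integral_zero_measure, sub_zero, sub_self]
        refine ⟨le_rfl, mul_nonneg (htail0 m) (mul_nonneg hZ₀0 (by linarith))⟩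
      · have hxb' : x ≤ b := hxb x hx
        have hpt : ∀ y ∈ Ioc a x,
            (∑' i : ℕ, iterK (volKernel W k) (i+1) x y) * Z y
              - (∑ i ∈ Finset.Icc 1 m, iterK (volKernel W k) i x y) * Z y
            = (∑' i : ℕ, iterK (volKernel W k) (i + m + 1) x y) * Z y := by
          intro y hy
          rw [← sub_mul]
          congr 1
          rw [sum_Icc_one (fun i => iterK (volKernel W k) i x y) m]
          have h := Summable.sum_add_tsum_nat_add
            (f := fun j : ℕ => iterK (volKernel W k) (j+1) x y) m (hsum x y)
          linarith [h]
        have hIntTail : IntegrableOn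
            (fun y => (∑' i : ℕ, iterK (volKernel W k) (i + m + 1) x y) * Z y)
            (Ioc a x) := by
          apply MeasureTheory.IntegrableOn.congr_fun ((hIntR x).sub (hIntS m x)) _
            measurableSet_Ioc
          intro y hy
          simp only [Pi.sub_apply]
          exact hpt y hy
        rw [hdiff, ← integral_sub (hIntR x) (hIntS m x),
          setIntegral_congr_fun measurableSet_Ioc hpt]
        constructor
        · apply setIntegral_nonneg measurableSet_Ioc
          intro y hy
          exact mul_nonneg (tsum_nonneg fun i => iterK_nonneg hWnonneg hknonneg _ x y)
            (hZnonneg y)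
        · have hBtail : Summable (fun i => B (i + m)) := (summable_nat_add_iff m).2 hBsum
          calc (∫ y in Ioc a x, (∑' i : ℕ, iterK (volKernel W k) (i + m + 1) x y) * Z y)
              ≤ ∫ _y in Ioc a x, (∑' i, B (i + m)) * Z t := by
                apply setIntegral_mono_on hIntTail
                  (integrableOn_const (C := (∑' i, B (i + m)) * Z t)
                    measure_Ioc_lt_top.ne) measurableSet_Ioc
                intro y hy
                have hts : Summable (fun i => iterK (volKernel W k) (i + m + 1) x y) :=
                  (summable_nat_add_iff m).2 (hsum x y)
                refine mul_le_mul ?_ (hZmax ⟨hy.1.le, le_trans hy.2 hxb'⟩) (hZnonneg y)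
                  (htail0 m)
                exact Summable.tsum_le_tsum
                  (fun i => hBle (i + m) x y hy.1.le hy.2 hxb') hts hBtail
            _ = (volume (Ioc a x)).toReal * ((∑' i, B (i + m)) * Z t) := by
                rw [setIntegral_const, smul_eq_mul, Measure.real]
            _ ≤ (b - a) * ((∑' i, B (i + m)) * Z t) := by
                apply mul_le_mul_of_nonneg_right _ (mul_nonneg (htail0 m) hZ₀0)
                rw [Real.volume_Ioc, ENNReal.toReal_ofReal (by linarith)]
                linarith
            _ = (∑' i, B (i + m)) * (Z t * (b - a)) := by ring
    rw [Real.dist_eq, abs_of_nonneg key.1]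
    exact lt_of_le_of_lt key.2 hm
  -- Part 3 : continuity
  have hcont : ∀ m : ℕ, Continuous (picardH W k Z a m) := by
    intro m
    have hfun : picardH W k Z a m = fun x => Z x + ∫ y, (Ioc a x).indicator
        (fun y => (∑ i ∈ Finset.Icc 1 m, iterK (volKernel W k) i x y) * Z y) y := by
      funext x
      rw [picardH_eq, ← integral_indicator measurableSet_Ioc]
    rw [hfun, continuous_iff_continuousAt]
    intro x₀
    apply ContinuousAt.add hZc.continuousAt
    set b : ℝ := max (x₀ + 1) a with hbdef
    have hab : a ≤ b := le_max_right _ _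
    obtain ⟨B, hB0, hBsum, hBle⟩ := master b hab
    obtain ⟨t, ht, hZmax⟩ := isCompact_Icc.exists_isMaxOn (s := Icc a b)
      (nonempty_Icc.2 hab) hZc.continuousOn
    set c : ℝ := (∑ i ∈ Finset.Icc 1 m, B (i-1)) * Z t with hcdef
    have hc0 : 0 ≤ c := mul_nonneg (Finset.sum_nonneg fun i _ => hB0 _) (hZnonneg t)
    show Tendsto _ (𝓝 x₀) _
    apply tendsto_integral_filter_of_dominated_convergence ((Ioc a b).indicator fun _ => c)
    · apply Eventually.of_forall
      intro x
      apply Measurable.aestronglyMeasurable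
      apply Measurable.indicator _ measurableSet_Ioc
      exact (Finset.measurable_sum _ fun i _ =>
        (measIter hWm hkmeas i).comp (measurable_const.prodMk measurable_id)).mul hZm
    · refine eventually_of_mem (Iio_mem_nhds (show x₀ < x₀ + 1 by linarith)) ?_
      intro x hx
      apply Eventually.of_forall
      intro y
      by_cases hy : y ∈ Ioc a x
      · have hxb : x ≤ b := le_trans (le_of_lt hx) (le_max_left _ _)
        rw [indicator_of_mem hy, indicator_of_mem
          (show y ∈ Ioc a b from ⟨hy.1, le_trans hy.2 hxb⟩)]
        have hterm : ∀ i ∈ Finset.Icc 1 m, iterK (volKernel W k) i x y ≤ B (i-1) := by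
          intro i hi
          have h1 : 1 ≤ i := (Finset.mem_Icc.1 hi).1
          have hieq : i = (i - 1) + 1 := (Nat.succ_pred_eq_of_pos h1).symm
          rw [hieq]
          exact hBle (i-1) x y hy.1.le hy.2 hxb
        have hsnn : 0 ≤ ∑ i ∈ Finset.Icc 1 m, iterK (volKernel W k) i x y :=
          Finset.sum_nonneg fun i _ => iterK_nonneg hWnonneg hknonneg i x y
        rw [Real.norm_eq_abs, abs_of_nonneg (mul_nonneg hsnn (hZnonneg y))]
        exact mul_le_mul (Finset.sum_le_sum hterm)
          (hZmax ⟨hy.1.le, le_trans hy.2 hxb⟩) (hZnonneg y)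
          (Finset.sum_nonneg fun i _ => hB0 _)
      · rw [indicator_of_notMem hy, norm_zero]
        exact indicator_nonneg (fun _ _ => hc0) _
    · exact (integrableOn_const measure_Ioc_lt_top.ne).integrable_indicator
        measurableSet_Ioc
    · filter_upwards [ae_ne x₀] with y hy
      by_cases hya : y ≤ a
      · have h0 : ∀ x : ℝ, (Ioc a x).indicator
            (fun y => (∑ i ∈ Finset.Icc 1 m, iterK (volKernel W k) i x y) * Z y) y = 0 :=
          fun x => indicator_of_notMem (fun hmem => absurd hmem.1 (not_lt.2 hya)) _
        simp only [h0]
        exact tendsto_const_nhds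
      · push_neg at hya
        rcases lt_or_gt_of_ne hy with hlt | hgt
        · have hev : ∀ᶠ x in 𝓝 x₀,
              (∑ i ∈ Finset.Icc 1 m, iterK (volKernel W k) i x y) * Z y
                = (Ioc a x).indicator
                    (fun y => (∑ i ∈ Finset.Icc 1 m, iterK (volKernel W k) i x y) * Z y) y :=
            eventually_of_mem (Ioi_mem_nhds hlt) fun x hxx =>
              (indicator_of_mem (show y ∈ Ioc a x from ⟨hya, le_of_lt hxx⟩)
                (fun y => (∑ i ∈ Finset.Icc 1 m, iterK (volKernel W k) i x y) * Z y)).symm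
          rw [indicator_of_mem (show y ∈ Ioc a x₀ from ⟨hya, hlt.le⟩)]
          refine (Tendsto.mul_const _ ?_).congr' hev
          apply tendsto_finset_sum
          intro i hi
          have h1 : 1 ≤ i := (Finset.mem_Icc.1 hi).1
          have hieq : i = (i - 1) + 1 := (Nat.succ_pred_eq_of_pos h1).symm
          have h := tendsto_iterK hWnonneg hW0 hWc hknonneg hC hkmeas (i-1) hlt
          rw [← hieq] at h
          exact h
        · have hev : ∀ᶠ x in 𝓝 x₀, (0:ℝ)
              = (Ioc a x).indicator
                  (fun y => (∑ i ∈ Finset.Icc 1 m, iterK (volKernel W k) i x y) * Z y) y :=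
            eventually_of_mem (Iio_mem_nhds hgt) fun x hxx =>
              (indicator_of_notMem (fun hmem => absurd hmem.2 (not_le.2 hxx)) _).symm
          rw [indicator_of_notMem (fun hmem => absurd hmem.2 (not_le.2 hgt))]
          exact tendsto_const_nhds.congr' hev
  have part3 : Continuous (limitH W k Z a) := by
    have h1 : TendstoLocallyUniformly (fun m x => picardH W k Z a m x)
        (limitH W k Z a) atTop :=
      tendstoLocallyUniformly_iff_forall_isCompact.2 fun K hK => part2 K hK
    exact h1.continuous (Eventually.of_forall hcont).frequently
  exact ⟨fun x m n _ hmn => part1 x m n hmn, part2, part3⟩
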